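/- The supports of the codewords of weight 2^{m-1} in the first-order Reed-Muller code RM(1,m), for m ≥ 3, form a 3-(2^m, 2^{m-1}, 2^{m-2}−1) design. -/
import Mathlib

open Finset

variable {m : ℕ}

private def dotp (a x : Fin m → ZMod 2) : ZMod 2 := ∑ i, a i * x i

lemma dotp_add_right (a x y : Fin m → ZMod 2) : dotp a (x + y) = dotp a x + dotp a y := by
  simp [dotp, mul_add, Finset.sum_add_distrib]

lemma dotp_add_left (a w x : Fin m → ZMod 2) : dotp (a + w) x = dotp a x + dotp w x := by
  simp [dotp, add_mul, Finset.sum_add_distrib]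

lemma dotp_zero_left (x : Fin m → ZMod 2) : dotp 0 x = 0 := by simp [dotp]

lemma dotp_zero_right (a : Fin m → ZMod 2) : dotp a 0 = 0 := by simp [dotp]

lemma dotp_single_right (a : Fin m → ZMod 2) (i : Fin m) : dotp a (Pi.single i 1) = a i := by
  simp [dotp, Pi.single_apply]

lemma dotp_single_left (u : Fin m → ZMod 2) (i : Fin m) : dotp (Pi.single i 1) u = u i := by
  simp [dotp, Pi.single_apply]

lemma z2_cases : ∀ c : ZMod 2, c = 0 ∨ c = 1 := by decide
lemma z2_ne : ∀ c : ZMod 2, c ≠ 0 ↔ c = 1 := by decide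
lemma z2_add_eq_zero : ∀ c d : ZMod 2, c + d = 0 ↔ c = d := by decide
lemma z2_add_self : ∀ c : ZMod 2, c + c = 0 := by decide

lemma sep (u v : Fin m → ZMod 2) (hu : u ≠ 0) (hv : v ≠ 0) (huv : u ≠ v) :
    ∃ a : Fin m → ZMod 2, dotp a u = 1 ∧ dotp a v = 0 := by
  obtain ⟨i, hi⟩ := Function.ne_iff.mp hu
  simp only [Pi.zero_apply] at hi
  have hui : u i = 1 := (z2_ne _).mp hi
  rcases z2_cases (v i) with hvi | hvi
  · exact ⟨Pi.single i 1, by rw [dotp_single_left, hui], by rw [dotp_single_left, hvi]⟩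
  · obtain ⟨j, hj⟩ := Function.ne_iff.mp huv
    rcases z2_cases (u j) with huj | huj
    · have hvj : v j = 1 := by
        rcases z2_cases (v j) with h | h
        · exact absurd (huj.trans h.symm) hj
        · exact h
      refine ⟨Pi.single i 1 + Pi.single j 1, ?_, ?_⟩
      · rw [dotp_add_left, dotp_single_left, dotp_single_left, hui, huj, add_zero]
      · rw [dotp_add_left, dotp_single_left, dotp_single_left, hvi, hvj]; decide
    · have hvj : v j = 0 := by
        rcases z2_cases (v j) with h | h
        · exact h
        · exact absurd (huj.trans h.symm) hj
      exact ⟨Pi.single j 1, by rw [dotp_single_left, huj], by rw [dotp_single_left, hvj]⟩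

lemma add_w_w (a w : Fin m → ZMod 2) : a + w + w = a := by
  funext i
  show a i + w i + w i = a i
  rw [add_assoc, z2_add_self, add_zero]

lemma card_shift (p q : (Fin m → ZMod 2) → Prop) [DecidablePred p] [DecidablePred q]
    (w : Fin m → ZMod 2) (h : ∀ a, p a ↔ q (a + w)) :
    (univ.filter p).card = (univ.filter q).card := by
  refine Finset.card_bij' (fun a _ => a + w) (fun a _ => a + w) ?_ ?_ ?_ ?_
  · intro a ha
    simp only [mem_filter, mem_univ, true_and] at ha ⊢
    exact (h a).mp ha
  · intro a ha
    simp only [mem_filter, mem_univ, true_and] at ha ⊢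
    rw [h]
    rwa [add_w_w]
  · intro a _; exact add_w_w a w
  · intro a _; exact add_w_w a w

lemma card_filter_affine (a : Fin m → ZMod 2) (b : ZMod 2) (ha : a ≠ 0) (hm : 1 ≤ m) :
    (univ.filter fun x => dotp a x + b ≠ 0).card = 2 ^ (m - 1) := by
  obtain ⟨i, hi⟩ := Function.ne_iff.mp ha
  simp only [Pi.zero_apply] at hi
  have hai : a i = 1 := (z2_ne _).mp hi
  set w : Fin m → ZMod 2 := Pi.single i 1 with hw
  have hshift : (univ.filter fun x => dotp a x + b ≠ 0).card
      = (univ.filter fun x => dotp a x + b = 0).card := by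
    refine card_shift _ _ w ?_
    intro x
    rw [dotp_add_right, dotp_single_right, hai]
    revert b
    generalize dotp a x = c
    revert c; decide
  have hsum : (univ.filter fun x => dotp a x + b ≠ 0).card
      + (univ.filter fun x => dotp a x + b = 0).card = 2 ^ m := by
    have := Finset.card_filter_add_card_filter_not
      (s := (univ : Finset (Fin m → ZMod 2))) (p := fun x => dotp a x + b ≠ 0)
    simp only [not_ne_iff] at this
    rw [this]
    simp [ZMod.card]
  have hpow : 2 ^ m = 2 ^ (m - 1) * 2 := by
    rw [← pow_succ]; congr 1; omega
  omega

lemma card_filter_two (u v : Fin m → ZMod 2) (hu : u ≠ 0) (hv : v ≠ 0) (huv : u ≠ v)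
    (hm : 2 ≤ m) :
    (univ.filter fun a => dotp a u = 0 ∧ dotp a v = 0).card = 2 ^ (m - 2) := by
  obtain ⟨w1, hw1u, hw1v⟩ := sep u v hu hv huv
  obtain ⟨w2, hw2v, hw2u⟩ := sep v u hv hu (Ne.symm huv)
  have shift : ∀ c d : ZMod 2, ∀ w : Fin m → ZMod 2,
      (univ.filter fun a => dotp a u = c ∧ dotp a v = d).card
      = (univ.filter fun a => dotp a u = c + dotp w u ∧ dotp a v = d + dotp w v).card := by
    intro c d w
    refine card_shift _ _ w ?_
    intro a
    rw [dotp_add_left, dotp_add_left]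
    constructor
    · rintro ⟨h1, h2⟩; rw [h1, h2]; exact ⟨rfl, rfl⟩
    · rintro ⟨h1, h2⟩
      exact ⟨add_right_cancel h1, add_right_cancel h2⟩
  have e10 : (univ.filter fun a => dotp a u = 0 ∧ dotp a v = 0).card
      = (univ.filter fun a => dotp a u = 1 ∧ dotp a v = 0).card := by
    have := shift 0 0 w1
    rwa [hw1u, hw1v, zero_add, zero_add] at this
  have e01 : (univ.filter fun a => dotp a u = 0 ∧ dotp a v = 0).card
      = (univ.filter fun a => dotp a u = 0 ∧ dotp a v = 1).card := by
    have := shift 0 0 w2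
    rwa [hw2u, hw2v, zero_add, zero_add] at this
  have e11 : (univ.filter fun a => dotp a u = 0 ∧ dotp a v = 1).card
      = (univ.filter fun a => dotp a u = 1 ∧ dotp a v = 1).card := by
    have := shift 0 1 w1
    rwa [hw1u, hw1v, zero_add, add_zero] at this
  -- sum of the four fibers is 2^m
  have hA : (univ.filter fun a : Fin m → ZMod 2 => dotp a u = 0).card
      = (univ.filter fun a => dotp a u = 0 ∧ dotp a v = 0).card
      + (univ.filter fun a => dotp a u = 0 ∧ dotp a v = 1).card := by
    rw [← Finset.filter_filter, ← Finset.filter_filter,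
      ← Finset.card_filter_add_card_filter_not
        (s := univ.filter fun a : Fin m → ZMod 2 => dotp a u = 0) (p := fun a => dotp a v = 0)]
    congr 1
    refine congrArg Finset.card (Finset.filter_congr ?_)
    intro a _
    simp [z2_ne]
  have hB : (univ.filter fun a : Fin m → ZMod 2 => dotp a u = 1).card
      = (univ.filter fun a => dotp a u = 1 ∧ dotp a v = 0).card
      + (univ.filter fun a => dotp a u = 1 ∧ dotp a v = 1).card := by
    rw [← Finset.filter_filter, ← Finset.filter_filter,
      ← Finset.card_filter_add_card_filter_not
        (s := univ.filter fun a : Fin m → ZMod 2 => dotp a u = 1) (p := fun a => dotp a v = 0)]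
    congr 1
    refine congrArg Finset.card (Finset.filter_congr ?_)
    intro a _
    simp [z2_ne]
  have hAB : (univ.filter fun a : Fin m → ZMod 2 => dotp a u = 0).card
      + (univ.filter fun a : Fin m → ZMod 2 => dotp a u = 1).card = 2 ^ m := by
    have := Finset.card_filter_add_card_filter_not
      (s := (univ : Finset (Fin m → ZMod 2))) (p := fun a => dotp a u = 0)
    rw [show ((univ : Finset (Fin m → ZMod 2)).filter fun a => ¬ dotp a u = 0)
        = (univ.filter fun a => dotp a u = 1) from Finset.filter_congr
          (fun a _ => by simp [z2_ne])] at this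
    rw [this]
    simp [ZMod.card]
  have hpow : 2 ^ m = 2 ^ (m - 2) * 4 := by
    rw [show m = (m - 2) + 2 by omega]
    rw [pow_add]
    norm_num
  omega

lemma z2_iff : ∀ c d : ZMod 2, ((c ≠ 0) ↔ (d ≠ 0)) → c = d := by decide
lemma z2_solve : ∀ c b : ZMod 2, c + b = 1 → b = 1 + c := by decide
lemma z2_two : ∀ c d b : ZMod 2, c + b = 1 → d + b = 1 → c + d = 0 := by decide
lemma z2_self1 : ∀ c : ZMod 2, c + (1 + c) = 1 := by decide

/-- For m ≥ 3, the supports of the codewords of weight 2^(m-1) in the first-order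
Reed-Muller code RM(1,m) (the evaluations of affine functions a·x + b on GF(2)^m)
form a 3-(2^m, 2^(m-1), 2^(m-2)−1) design. -/
theorem rm1_supports_form_3design (m : ℕ) (hm : 3 ≤ m) :
    ∀ T : Finset (Fin m → ZMod 2), T.card = 3 →
      Nat.card {S : Finset (Fin m → ZMod 2) //
          (∃ (a : Fin m → ZMod 2) (b : ZMod 2),
            S = Finset.univ.filter (fun x => (∑ i, a i * x i) + b ≠ 0) ∧
            S.card = 2 ^ (m - 1)) ∧ T ⊆ S} =
        2 ^ (m - 2) - 1 := by
  intro T hT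
  obtain ⟨x, y, z, hxy, hxz, hyz, rfl⟩ := Finset.card_eq_three.mp hT
  set u : Fin m → ZMod 2 := x + y with hu_def
  set v : Fin m → ZMod 2 := x + z with hv_def
  have hu : u ≠ 0 := fun h =>
    hxy (funext fun i => (z2_add_eq_zero (x i) (y i)).mp (congrFun h i))
  have hv : v ≠ 0 := fun h =>
    hxz (funext fun i => (z2_add_eq_zero (x i) (z i)).mp (congrFun h i))
  have huv : u ≠ v := fun h =>
    hyz (funext fun i => add_left_cancel (a := x i) (congrFun h i))
  have hm1 : 1 ≤ m := by omega
  set b0 : (Fin m → ZMod 2) → ZMod 2 := fun a => 1 + dotp a x with hb0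
  set Sof : (Fin m → ZMod 2) → Finset (Fin m → ZMod 2) :=
    fun a => Finset.univ.filter (fun t => (∑ i, a i * t i) + b0 a ≠ 0) with hSof
  have hmem : ∀ a t : Fin m → ZMod 2, t ∈ Sof a ↔ dotp a t + b0 a ≠ 0 := by
    intro a t
    simp only [hSof, mem_filter, mem_univ, true_and]
    exact Iff.rfl
  have hSofcard : ∀ a : Fin m → ZMod 2, a ≠ 0 → (Sof a).card = 2 ^ (m - 1) := by
    intro a ha
    exact card_filter_affine a (b0 a) ha hm1
  have hprop : ∀ a : Fin m → ZMod 2, a ≠ 0 → dotp a u = 0 → dotp a v = 0 →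
      ((∃ (a' : Fin m → ZMod 2) (b' : ZMod 2),
          Sof a = Finset.univ.filter (fun t => (∑ i, a' i * t i) + b' ≠ 0) ∧
          (Sof a).card = 2 ^ (m - 1)) ∧
        ({x, y, z} : Finset (Fin m → ZMod 2)) ⊆ Sof a) := by
    intro a ha hau hav
    have hdxy : dotp a y = dotp a x := by
      have : dotp a x + dotp a y = 0 := by rw [← dotp_add_right, ← hu_def, hau]
      exact ((z2_add_eq_zero _ _).mp this).symm
    have hdxz : dotp a z = dotp a x := by
      have : dotp a x + dotp a z = 0 := by rw [← dotp_add_right, ← hv_def, hav]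
      exact ((z2_add_eq_zero _ _).mp this).symm
    have hxmem : x ∈ Sof a := by
      rw [hmem]
      rw [hb0]
      rw [z2_self1]
      decide
    refine ⟨⟨a, b0 a, rfl, hSofcard a ha⟩, ?_⟩
    intro t ht
    simp only [Finset.mem_insert, Finset.mem_singleton] at ht
    rcases ht with rfl | rfl | rfl
    · exact hxmem
    · rw [hmem, hb0, hdxy, z2_self1]; decide
    · rw [hmem, hb0, hdxz, z2_self1]; decide
  set f : {a : Fin m → ZMod 2 // a ≠ 0 ∧ dotp a u = 0 ∧ dotp a v = 0} →
      {S : Finset (Fin m → ZMod 2) //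
        (∃ (a : Fin m → ZMod 2) (b : ZMod 2),
          S = Finset.univ.filter (fun x => (∑ i, a i * x i) + b ≠ 0) ∧
          S.card = 2 ^ (m - 1)) ∧ ({x, y, z} : Finset (Fin m → ZMod 2)) ⊆ S} :=
    fun a => ⟨Sof a.1, hprop a.1 a.2.1 a.2.2.1 a.2.2.2⟩ with hf
  have hbij : Function.Bijective f := by
    constructor
    · rintro ⟨a1, h1⟩ ⟨a2, h2⟩ hfeq
      have hSeq : Sof a1 = Sof a2 := congrArg Subtype.val hfeq
      have hpt : ∀ t, dotp a1 t + b0 a1 = dotp a2 t + b0 a2 := by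
        intro t
        apply z2_iff
        rw [← hmem, ← hmem, hSeq]
      have hb : b0 a1 = b0 a2 := by
        have := hpt 0
        rwa [dotp_zero_right, dotp_zero_right, zero_add, zero_add] at this
      have hdot : ∀ t, dotp a1 t = dotp a2 t := by
        intro t
        have := hpt t
        rw [hb] at this
        exact add_right_cancel this
      refine Subtype.ext (funext fun i => ?_)
      show a1 i = a2 i
      rw [← dotp_single_right a1 i, ← dotp_single_right a2 i, hdot]
    · rintro ⟨S, ⟨⟨a, b, hSeq, hcard⟩, hsub⟩⟩
      have hmemS : ∀ t, t ∈ S ↔ dotp a t + b ≠ 0 := by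
        intro t
        rw [hSeq]
        simp only [mem_filter, mem_univ, true_and]
        exact Iff.rfl
      have ha : a ≠ 0 := by
        rintro rfl
        have h0 : ∀ t : Fin m → ZMod 2, dotp 0 t + b = b := by
          intro t; rw [dotp_zero_left, zero_add]
        rcases z2_cases b with rfl | rfl
        · have : S = ∅ := by
            ext t
            simp only [Finset.notMem_empty, iff_false, hmemS, h0, ne_eq,
              not_true_eq_false, not_not]
          rw [this] at hcard
          simp at hcard
          exact absurd hcard.symm (pow_ne_zero _ (by norm_num))
        · have : S = Finset.univ := by
            ext t
            simp only [mem_univ, iff_true, hmemS, h0]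
            decide
          rw [this] at hcard
          have h2m : (Finset.univ : Finset (Fin m → ZMod 2)).card = 2 ^ m := by
            simp [ZMod.card]
          rw [h2m] at hcard
          have : 2 ^ (m - 1) < 2 ^ m := Nat.pow_lt_pow_right (by norm_num) (by omega)
          omega
      have hxS : dotp a x + b = 1 := (z2_ne _).mp ((hmemS x).mp (hsub (by simp)))
      have hyS : dotp a y + b = 1 := (z2_ne _).mp ((hmemS y).mp (hsub (by simp)))
      have hzS : dotp a z + b = 1 := (z2_ne _).mp ((hmemS z).mp (hsub (by simp)))
      have hau : dotp a u = 0 := by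
        rw [hu_def, dotp_add_right]; exact z2_two _ _ _ hxS hyS
      have hav : dotp a v = 0 := by
        rw [hv_def, dotp_add_right]; exact z2_two _ _ _ hxS hzS
      have hbb : b0 a = b := (z2_solve _ _ hxS).symm
      refine ⟨⟨a, ha, hau, hav⟩, ?_⟩
      refine Subtype.ext ?_
      show Sof a = S
      rw [hSeq, hSof]
      simp only
      rw [hbb]
  rw [← Nat.card_congr (Equiv.ofBijective f hbij)]
  rw [Nat.card_eq_fintype_card, Fintype.card_subtype]
  have hfe : Finset.univ.filter (fun a : Fin m → ZMod 2 =>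
        a ≠ 0 ∧ dotp a u = 0 ∧ dotp a v = 0)
      = (Finset.univ.filter fun a : Fin m → ZMod 2 =>
          dotp a u = 0 ∧ dotp a v = 0).erase 0 := by
    ext a
    simp only [mem_filter, mem_univ, true_and, Finset.mem_erase]
  rw [hfe, Finset.card_erase_of_mem (by simp [dotp_zero_left]),
    card_filter_two u v hu hv huv (by omega)]
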